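/- Let ε > 0 and λ ∈ ℝ with λ < 2d/ε². Let u : Ω → ℝ be such that u ∘ cp is twice differentiable on Ω and Δ(u ∘ cp)(x) = −λ u(x) for every x ∈ S (the closest-point characterization of u being a Laplace–Beltrami eigenfunction of S with eigenvalue λ). Define v : Ω → ℝ by v(x) = (Δ(u ∘ cp)(x) + (2d/ε²)·u(cp(x))) / (−λ + 2d/ε²). Then v(x) = u(x) for every x ∈ S, and v satisfies the regularized embedded eigenvalue problem −Δ♯_ε v(x) = λ v(x) for every x ∈ Ω. -/

import Mathlib

/-- The standard Euclidean Laplacian on `ℝ^d`: the sum of the second partial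
derivatives. -/
noncomputable def lap {d : ℕ} (f : EuclideanSpace ℝ (Fin d) → ℝ)
    (x : EuclideanSpace ℝ (Fin d)) : ℝ :=
  ∑ i : Fin d, fderiv ℝ (fun y => fderiv ℝ f y (EuclideanSpace.single i 1)) x
    (EuclideanSpace.single i 1)

/-- The regularized operator `Δ♯_ε v(x) = Δ(v ∘ cp)(x) − (2d/ε²)·(v(x) − v(cp(x)))`. -/
noncomputable def lapSharp {d : ℕ}
    (cp : EuclideanSpace ℝ (Fin d) → EuclideanSpace ℝ (Fin d)) (ε : ℝ)
    (v : EuclideanSpace ℝ (Fin d) → ℝ) (x : EuclideanSpace ℝ (Fin d)) : ℝ :=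
  lap (fun y => v (cp y)) x - (2 * (d : ℝ) / ε ^ 2) * (v x - v (cp x))

lemma lap_congr {d : ℕ} (f g : EuclideanSpace ℝ (Fin d) → ℝ)
    (Ω : Set (EuclideanSpace ℝ (Fin d))) (hΩ : IsOpen Ω)
    (h : ∀ y ∈ Ω, f y = g y) {x : EuclideanSpace ℝ (Fin d)} (hx : x ∈ Ω) :
    lap f x = lap g x := by
  unfold lap
  refine Finset.sum_congr rfl fun i _ => ?_
  have hfg : ∀ y ∈ Ω, fderiv ℝ f y = fderiv ℝ g y := fun y hy =>
    Filter.EventuallyEq.fderiv_eq (Filter.eventuallyEq_of_mem (hΩ.mem_nhds hy) h)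
  have h2 : (fun y => fderiv ℝ f y (EuclideanSpace.single i 1)) =ᶠ[nhds x]
      (fun y => fderiv ℝ g y (EuclideanSpace.single i 1)) :=
    Filter.eventuallyEq_of_mem (hΩ.mem_nhds hx) fun y hy => by rw [hfg y hy]
  rw [h2.fderiv_eq]

theorem stmt0 (d : ℕ) (hd : 1 ≤ d)
    (S Ω : Set (EuclideanSpace ℝ (Fin d))) (hSne : S.Nonempty) (hΩ : IsOpen Ω)
    (hSΩ : S ⊆ Ω)
    (cp : EuclideanSpace ℝ (Fin d) → EuclideanSpace ℝ (Fin d))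
    (hcpS : ∀ x ∈ Ω, cp x ∈ S)
    (hcpdist : ∀ x ∈ Ω, ‖x - cp x‖ = Metric.infDist x S)
    (ε lam : ℝ) (hε : 0 < ε) (hlam : lam < 2 * (d : ℝ) / ε ^ 2)
    (u : EuclideanSpace ℝ (Fin d) → ℝ)
    (hu2 : ContDiffOn ℝ 2 (fun x => u (cp x)) Ω)
    (heig : ∀ x ∈ S, lap (fun y => u (cp y)) x = -lam * u x)
    (v : EuclideanSpace ℝ (Fin d) → ℝ)
    (hv : ∀ x ∈ Ω, v x =
      (lap (fun y => u (cp y)) x + (2 * (d : ℝ) / ε ^ 2) * u (cp x)) /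
        (-lam + 2 * (d : ℝ) / ε ^ 2)) :
    (∀ x ∈ S, v x = u x) ∧
    (∀ x ∈ Ω, -(lapSharp cp ε v x) = lam * v x) := by
  set c : ℝ := 2 * (d : ℝ) / ε ^ 2 with hc
  have hne : -lam + c ≠ 0 := by linarith
  have hcpfix : ∀ x ∈ S, cp x = x := by
    intro x hxS
    have h0 : ‖x - cp x‖ = 0 := by
      rw [hcpdist x (hSΩ hxS), Metric.infDist_zero_of_mem hxS]
    have := norm_eq_zero.mp h0
    have : x - cp x = 0 := this
    linear_combination (norm := module) -this
  have part1 : ∀ x ∈ S, v x = u x := by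
    intro x hxS
    rw [hv x (hSΩ hxS), heig x hxS, hcpfix x hxS]
    field_simp
  refine ⟨part1, fun x hxΩ => ?_⟩
  have hvcp : ∀ y ∈ Ω, v (cp y) = u (cp y) := fun y hy => part1 _ (hcpS y hy)
  have hlapeq : lap (fun y => v (cp y)) x = lap (fun y => u (cp y)) x :=
    lap_congr _ _ Ω hΩ (fun y hy => hvcp y hy) hxΩ
  have hvx := hv x hxΩ
  unfold lapSharp
  rw [hlapeq, hvcp x hxΩ, ← hc]
  have : (-lam + c) * v x = lap (fun y => u (cp y)) x + c * u (cp x) := by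
    rw [hvx]; field_simp
  linarith [this]
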